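/- Let Y be a finite linearly ordered set, let w : Y → ℝ≥0 be a weight function that is non-increasing along the order (if y precedes y′ in the order then w(y) ≥ w(y′)), and let s ≥ 1 be a real number. If X ⊆ Y is s-sparse in Y, then ∑_{v∈X} w(v) ≤ (1/s)·∑_{v∈Y} w(v). -/

import Mathlib

/-- The set of the first `k` elements of the finite linearly ordered set `Y`
(all of `Y` if `k > |Y|`). -/
def firstK {α : Type*} [LinearOrder α] (Y : Finset α) (k : ℕ) : Finset α :=
  ((Y.sort (· ≤ ·)).take k).toFinset

/-- For a real `s ≥ 1`, a subset `X ⊆ Y` is `s`-principal in `Y` if `X` is nonempty and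
`X ⊆ Y_{⌊s·|X|⌋}`, i.e. all elements of `X` are among the first `⌊s·|X|⌋` elements of `Y`. -/
def IsPrincipal {α : Type*} [LinearOrder α] (s : ℝ) (Y X : Finset α) : Prop :=
  X.Nonempty ∧ X ⊆ firstK Y ⌊s * X.card⌋₊

/-- `X` is `s`-sparse in `Y` if `X` contains no (nonempty) subset that is `s`-principal in `Y`. -/
def IsSparse {α : Type*} [LinearOrder α] (s : ℝ) (Y X : Finset α) : Prop :=
  ∀ Z ⊆ X, ¬ IsPrincipal s Y Z


section lemmas
variable {α : Type*} [LinearOrder α]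

lemma sort_firstK (Y : Finset α) (k : ℕ) :
    (firstK Y k).sort (· ≤ ·) = (Y.sort (· ≤ ·)).take k := by
  rw [firstK]
  exact (List.toFinset_sort _ ((Y.sort_nodup (· ≤ ·)).sublist (List.take_sublist _ _))).2
    ((Y.pairwise_sort (· ≤ ·)).sublist (List.take_sublist _ _))

lemma firstK_subset (Y : Finset α) (k : ℕ) : firstK Y k ⊆ Y := by
  intro v hv
  rw [firstK, List.mem_toFinset] at hv
  exact (Finset.mem_sort (· ≤ ·)).1 (List.take_subset _ _ hv)

lemma firstK_mono (Y : Finset α) {k k' : ℕ} (h : k ≤ k') : firstK Y k ⊆ firstK Y k' := by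
  intro v hv
  rw [firstK, List.mem_toFinset] at hv ⊢
  have : (Y.sort (· ≤ ·)).take k = ((Y.sort (· ≤ ·)).take k').take k := by
    rw [List.take_take, min_eq_left h]
  rw [this] at hv
  exact List.take_subset _ _ hv

lemma firstK_eq_self (Y : Finset α) {k : ℕ} (h : Y.card ≤ k) : firstK Y k = Y := by
  rw [firstK, List.take_of_length_le (by rwa [Finset.length_sort]), Finset.sort_toFinset]

lemma firstK_firstK (Y : Finset α) (m k : ℕ) :
    firstK (firstK Y m) k = firstK Y (min k m) := by
  rw [firstK, sort_firstK, List.take_take, firstK]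

lemma card_firstK (Y : Finset α) (k : ℕ) : (firstK Y k).card = min k Y.card := by
  rw [firstK, List.card_toFinset,
    ((Y.sort_nodup (· ≤ ·)).sublist (List.take_sublist _ _)).dedup,
    List.length_take, Finset.length_sort]

lemma downset_eq_firstK {Y D : Finset α} (hDY : D ⊆ Y)
    (hdown : ∀ y ∈ Y, ∀ d ∈ D, y ≤ d → y ∈ D) : D = firstK Y D.card := by
  have hcard : (firstK Y D.card).card = D.card := by
    rw [card_firstK, min_eq_left (Finset.card_le_card hDY)]
  refine Finset.eq_of_subset_of_card_le ?_ (le_of_eq hcard)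
  -- D ⊆ firstK Y D.card
  intro d hd
  set l := Y.sort (· ≤ ·) with hl
  have hdl : d ∈ l := (Finset.mem_sort (· ≤ ·)).2 (hDY hd)
  obtain ⟨i, hi, hget⟩ := List.getElem_of_mem hdl
  -- all entries at indices ≤ i are in D
  have hsub : (l.take (i+1)).toFinset ⊆ D := by
    intro x hx
    rw [List.mem_toFinset] at hx
    obtain ⟨j, hj, hgj⟩ := List.getElem_of_mem hx
    rw [List.length_take] at hj
    have hj' : j < i + 1 := lt_of_lt_of_le hj (min_le_left _ _)
    rw [List.getElem_take] at hgj
    have hle : l[j]'(by omega) ≤ d := by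
      rcases Nat.lt_or_ge j i with h | h
      · rw [← hget]
        exact le_of_lt ((Y.sortedLT_sort.pairwise).rel_get_of_lt (by simpa using h))
      · have : j = i := by omega
        subst this; rw [hgj] at hget ⊢; rw [hget]
    rw [hgj] at hle
    exact hdown x ((Finset.mem_sort (· ≤ ·)).1 (hgj ▸ List.getElem_mem _)) d hd (hgj ▸ hle)
  have hcard2 : i + 1 ≤ D.card := by
    have := Finset.card_le_card hsub
    rwa [List.card_toFinset,
      ((Y.sort_nodup (· ≤ ·)).sublist (List.take_sublist _ _)).dedup,
      List.length_take, min_eq_left (by simp only [hl] at hi ⊢; omega)] at this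
  rw [firstK, List.mem_toFinset]
  have hi2 : i < (l.take D.card).length := by
    rw [List.length_take]; omega
  have : (l.take D.card)[i]'hi2 = d := by rw [List.getElem_take]; exact hget
  exact this ▸ List.getElem_mem _
end lemmas

lemma sparse_card {α : Type*} [LinearOrder α] {s : ℝ} {Y X : Finset α}
    (hX : IsSparse s Y X) (hXY : X ⊆ Y) (hXne : X.Nonempty) :
    s * X.card ≤ (Y.card : ℝ) := by
  by_contra hc
  push_neg at hc
  apply hX X (subset_refl X)
  refine ⟨hXne, ?_⟩
  rw [firstK_eq_self Y (Nat.le_floor (le_of_lt hc))]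
  exact hXY

lemma sparse_aux {α : Type*} [LinearOrder α] (s : ℝ) (hs : 1 ≤ s) :
    ∀ n (Y : Finset α), Y.card ≤ n → ∀ (w : α → ℝ), (∀ v ∈ Y, 0 ≤ w v) →
    (∀ a ∈ Y, ∀ b ∈ Y, a ≤ b → w b ≤ w a) →
    ∀ X, X ⊆ Y → IsSparse s Y X → ∑ v ∈ X, w v ≤ (1 / s) * ∑ v ∈ Y, w v := by
  have hs0 : (0:ℝ) < s := lt_of_lt_of_le one_pos hs
  intro n
  induction n with
  | zero =>
    intro Y hY w _ _ X hXY _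
    rw [Finset.card_eq_zero.1 (Nat.le_zero.1 hY)] at hXY ⊢
    rw [Finset.subset_empty.1 hXY]
    simp
  | succ n ih =>
    intro Y hY w hw0 hmono X hXY hX
    rcases X.eq_empty_or_nonempty with rfl | hXne
    · simp only [Finset.sum_empty]
      have h1 : 0 ≤ ∑ v ∈ Y, w v := Finset.sum_nonneg (fun v hv => hw0 v hv)
      positivity
    have hYne : Y.Nonempty := hXne.mono hXY
    set t := (Y.image w).min' (hYne.image w) with htdef
    have htmem : t ∈ Y.image w := Finset.min'_mem _ _
    obtain ⟨y0, hy0Y, hy0⟩ := Finset.mem_image.1 htmem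
    have htle : ∀ v ∈ Y, t ≤ w v := fun v hv =>
      Finset.min'_le _ _ (Finset.mem_image_of_mem w hv)
    have ht0 : 0 ≤ t := hy0 ▸ hw0 y0 hy0Y
    set Y' := Y.filter (fun v => t < w v) with hY'def
    set X' := X.filter (fun v => t < w v) with hX'def
    have hX'Y' : X' ⊆ Y' := Finset.filter_subset_filter _ hXY
    have hY'Y : Y' ⊆ Y := Finset.filter_subset _ _
    have hy0nY' : y0 ∉ Y' := fun h => by
      have := (Finset.mem_filter.1 h).2; rw [hy0] at this; exact lt_irrefl t this
    have hY'card : Y'.card ≤ n := by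
      have : Y'.card < Y.card := Finset.card_lt_card ⟨hY'Y, fun h => hy0nY' (h hy0Y)⟩
      omega
    -- Y' is a down-set
    have hdown : Y' = firstK Y Y'.card := downset_eq_firstK hY'Y (by
      intro y hy d hd hyd
      have hd' := Finset.mem_filter.1 hd
      exact Finset.mem_filter.2 ⟨hy, lt_of_lt_of_le hd'.2 (hmono y hy d hd'.1 hyd)⟩)
    -- X' is sparse in Y'
    have hX' : IsSparse s Y' X' := by
      intro Z hZ hP
      obtain ⟨hZne, hZsub⟩ := hP
      apply hX Z (hZ.trans (Finset.filter_subset _ _))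
      refine ⟨hZne, ?_⟩
      rw [hdown, firstK_firstK] at hZsub
      exact hZsub.trans (firstK_mono Y (min_le_left _ _))
    -- apply IH
    have hIH := ih Y' hY'card (fun v => w v - t)
      (fun v hv => sub_nonneg.2 (le_of_lt (Finset.mem_filter.1 hv).2))
      (fun a ha b hb hab => by
        have := hmono a (hY'Y ha) b (hY'Y hb) hab
        show w b - t ≤ w a - t
        linarith)
      X' hX'Y' hX'
    -- rewrite sums
    have hsumX : ∑ v ∈ X', (w v - t) = ∑ v ∈ X, w v - t * X.card := by
      rw [hX'def, Finset.sum_filter_of_ne (fun v hv hne => lt_of_le_of_ne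
        (htle v (hXY hv)) (fun h => hne (by rw [← h]; ring)))]
      rw [Finset.sum_sub_distrib, Finset.sum_const, nsmul_eq_mul]
      ring
    have hsumY : ∑ v ∈ Y', (w v - t) = ∑ v ∈ Y, w v - t * Y.card := by
      rw [hY'def, Finset.sum_filter_of_ne (fun v hv hne => lt_of_le_of_ne
        (htle v hv) (fun h => hne (by rw [← h]; ring)))]
      rw [Finset.sum_sub_distrib, Finset.sum_const, nsmul_eq_mul]
      ring
    have hcard : s * X.card ≤ (Y.card : ℝ) := sparse_card hX hXY hXne
    have hct : t * X.card ≤ (1/s) * (t * Y.card) := by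
      rw [div_mul_eq_mul_div, one_mul, le_div_iff₀ hs0]
      nlinarith
    rw [hsumX, hsumY] at hIH
    have hexp : (1/s) * ∑ v ∈ Y, w v
        = (1/s) * (∑ v ∈ Y, w v - t * Y.card) + (1/s) * (t * Y.card) := by ring
    linarith

theorem sparse_weight_le {α : Type*} [LinearOrder α]
    (Y : Finset α) (w : α → ℝ) (hw0 : ∀ v ∈ Y, 0 ≤ w v)
    (hmono : ∀ a ∈ Y, ∀ b ∈ Y, a ≤ b → w b ≤ w a)
    (s : ℝ) (hs : 1 ≤ s) (X : Finset α) (hXY : X ⊆ Y) (hX : IsSparse s Y X) :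
    ∑ v ∈ X, w v ≤ (1 / s) * ∑ v ∈ Y, w v :=
  sparse_aux s hs Y.card Y le_rfl w hw0 hmono X hXY hX
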